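/- Let t be a finite rooted tree and define the path ∅ = u_0 ⪯ u_1 ⪯ ··· ⪯ u_k, where for each i, u_{i+1} is the unique child of u_i with |θ_{u_{i+1}} t| ≥ |t|/2 (and k is the first index at which no such child exists). Then the node u_k minimizes the centrality measure φ_t over all nodes of t, and the competitive ratio satisfies Φ(t) ≤ ∏_{i=1}^k 1/(1 − |θ_{u_i} t|/|t|). -/
import Mathlib


open Finset
open scoped Classical

/-- A plane tree in the Ulam–Harris formalism: a finite set of words
containing the root, closed under parents, with children `u*0, …, u*(k-1)`. -/
def IsPlaneTree (t : Finset (List ℕ)) : Prop :=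
  [] ∈ t ∧ (∀ u ∈ t, u ≠ [] → u.dropLast ∈ t) ∧
  (∀ u j k, u ++ [j] ∈ t → k ≤ j → u ++ [k] ∈ t)

/-- `subSize t v` is the number of nodes of the subtree of `t` rooted at `v`. -/
noncomputable def subSize (t : Finset (List ℕ)) (v : List ℕ) : ℕ :=
  (t.filter (fun w => v <+: w)).card

/-- The centrality measure `φ_t(u)`. -/
noncomputable def phi (t : Finset (List ℕ)) (u : List ℕ) : ℝ :=
  (∏ v ∈ t.filter (fun v => ¬ v <+: u), (subSize t v : ℝ)) *
  (∏ v ∈ t.filter (fun v => v ≠ [] ∧ v <+: u), ((t.card : ℝ) - subSize t v))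

/-- The competitive ratio `Φ(t) = φ_t(∅) / min_{u ∈ t} φ_t(u)`. -/
noncomputable def PhiRatio (t : Finset (List ℕ)) : ℝ :=
  phi t [] / sInf (phi t '' ↑t)

section Aux

variable {t : Finset (List ℕ)}

lemma subSize_pos {v : List ℕ} (hv : v ∈ t) : 0 < subSize t v :=
  Finset.card_pos.2 ⟨v, Finset.mem_filter.2 ⟨hv, List.prefix_refl v⟩⟩

lemma subSize_le_of_prefix {p v : List ℕ} (h : p <+: v) : subSize t v ≤ subSize t p := by
  apply Finset.card_le_card
  intro x hx
  obtain ⟨hxt, hpre⟩ := Finset.mem_filter.1 hx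
  exact Finset.mem_filter.2 ⟨hxt, h.trans hpre⟩

lemma subSize_lt (hroot : [] ∈ t) {v : List ℕ} (hv : v ≠ []) : subSize t v < t.card := by
  apply Finset.card_lt_card
  rw [Finset.ssubset_iff_of_subset (Finset.filter_subset _ _)]
  exact ⟨[], hroot, by simp [hv]⟩

lemma phi_pos (hroot : [] ∈ t) (x : List ℕ) : 0 < phi t x := by
  apply mul_pos
  · apply Finset.prod_pos
    intro v hv
    exact_mod_cast subSize_pos (Finset.mem_filter.1 hv).1
  · apply Finset.prod_pos
    intro v hv
    obtain ⟨hvt, hne, -⟩ := Finset.mem_filter.1 hv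
    have h := subSize_lt hroot hne
    have h' : (subSize t v : ℝ) < t.card := by exact_mod_cast h
    linarith

lemma phi_step (hroot : [] ∈ t) {v : List ℕ} {j : ℕ} (hw : v ++ [j] ∈ t) :
    phi t (v ++ [j]) * (subSize t (v ++ [j]) : ℝ)
      = phi t v * ((t.card : ℝ) - subSize t (v ++ [j])) := by
  set w := v ++ [j] with hwdef
  have hnp : ¬ w <+: v := by
    intro h
    have := h.length_le
    simp [hwdef] at this
  have key : ∀ x : List ℕ, x <+: w ↔ x = w ∨ x <+: v := fun x => List.prefix_concat_iff
  have hf1 : t.filter (fun p => ¬ p <+: v) = insert w (t.filter fun p => ¬ p <+: w) := by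
    ext x
    by_cases hx : x = w <;>
      simp [Finset.mem_insert, Finset.mem_filter, key, hx, hw, hnp]
  have hf2 : t.filter (fun p => p ≠ [] ∧ p <+: w)
      = insert w (t.filter fun p => p ≠ [] ∧ p <+: v) := by
    have hwne : w ≠ [] := by simp [hwdef]
    ext x
    by_cases hx : x = w <;>
      simp [Finset.mem_insert, Finset.mem_filter, key, hx, hw, hnp, hwne]
  have hw1 : w ∉ t.filter (fun p => ¬ p <+: w) := by
    simp [Finset.mem_filter, List.prefix_refl]
  have hw2 : w ∉ t.filter (fun p => p ≠ [] ∧ p <+: v) := by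
    simp [Finset.mem_filter, hnp]
  unfold phi
  rw [hf1, hf2, Finset.prod_insert hw1, Finset.prod_insert hw2]
  ring

end Aux

theorem stmt3 (t : Finset (List ℕ)) (ht : IsPlaneTree t) (k : ℕ) (u : ℕ → List ℕ)
    (h0 : u 0 = [])
    (hmem : ∀ i ≤ k, u i ∈ t)
    (hchild : ∀ i < k, (∃ j, u (i + 1) = u i ++ [j]) ∧ t.card ≤ 2 * subSize t (u (i + 1)))
    (hstop : ∀ j, u k ++ [j] ∈ t → 2 * subSize t (u k ++ [j]) < t.card) :
    (∀ v ∈ t, phi t (u k) ≤ phi t v) ∧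
      PhiRatio t ≤ ∏ i ∈ Finset.Icc 1 k, (1 - (subSize t (u i) : ℝ) / t.card)⁻¹ := by
  obtain ⟨hroot, hparent, -⟩ := ht
  have hn : 0 < t.card := Finset.card_pos.2 ⟨[], hroot⟩
  have hne : ∀ i, 1 ≤ i → i ≤ k → u i ≠ [] := by
    intro i h1 h2
    obtain ⟨⟨j, hj⟩, -⟩ := hchild (i - 1) (by omega)
    have e : i - 1 + 1 = i := by omega
    rw [e] at hj
    rw [hj]
    simp
  -- every vertex not on the path has subtree of size < half
  have offpath : ∀ m, ∀ v : List ℕ, v.length = m → v ∈ t →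
      (∀ i ≤ k, v ≠ u i) → 2 * subSize t v < t.card := by
    intro m
    induction m using Nat.strong_induction_on with
    | _ m ih =>
      intro v hlen hvt hoff
      have hvne : v ≠ [] := by
        intro h
        exact hoff 0 (Nat.zero_le k) (by rw [h, h0])
      obtain ⟨p, j, rfl⟩ : ∃ p j, v = p ++ [j] :=
        ⟨v.dropLast, v.getLast hvne, (List.dropLast_append_getLast hvne).symm⟩
      have hpt : p ∈ t := by
        have := hparent _ hvt (by simp)
        simpa using this
      by_cases hp : ∃ i ≤ k, p = u i
      · obtain ⟨i, hik, hpu⟩ := hp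
        rcases eq_or_lt_of_le hik with heq | hlt
        · subst heq
          rw [hpu]
          exact hstop j (by rwa [hpu] at hvt)
        · obtain ⟨⟨j', hj'⟩, hsz⟩ := hchild i hlt
          have hvne' : p ++ [j] ≠ u (i + 1) := hoff (i + 1) hlt
          have hdisj : Disjoint (t.filter (fun w => p ++ [j] <+: w))
              (t.filter (fun w => u (i + 1) <+: w)) := by
            rw [Finset.disjoint_left]
            intro x hx1 hx2
            have h1 := (Finset.mem_filter.1 hx1).2
            have h2 := (Finset.mem_filter.1 hx2).2
            have hlen' : (p ++ [j]).length = (u (i + 1)).length := by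
              rw [hj', hpu]; simp
            rcases List.prefix_or_prefix_of_prefix h1 h2 with h | h
            · exact hvne' (h.eq_of_length hlen')
            · exact hvne' ((h.eq_of_length hlen'.symm).symm)
          have hune : u (i + 1) ≠ [] := hne (i + 1) (by omega) hlt
          have hsub : (t.filter (fun w => p ++ [j] <+: w)) ∪
              (t.filter (fun w => u (i + 1) <+: w)) ⊆ t.erase [] := by
            intro x hx
            rcases Finset.mem_union.1 hx with hx | hx
            · obtain ⟨hxt, hpre⟩ := Finset.mem_filter.1 hx
              refine Finset.mem_erase.2 ⟨?_, hxt⟩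
              rintro rfl
              simp [List.prefix_nil] at hpre
            · obtain ⟨hxt, hpre⟩ := Finset.mem_filter.1 hx
              refine Finset.mem_erase.2 ⟨?_, hxt⟩
              rintro rfl
              exact hune (List.prefix_nil.1 hpre)
          have hcard : subSize t (p ++ [j]) + subSize t (u (i + 1)) ≤ t.card - 1 := by
            have h1 := Finset.card_le_card hsub
            rw [Finset.card_union_of_disjoint hdisj] at h1
            have h2 := Finset.card_erase_of_mem hroot
            unfold subSize
            omega
          omega
      · push_neg at hp
        have hplen : p.length < m := by
          simp at hlen
          omega
        have hoffp := ih p.length hplen p rfl hpt hp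
        have hmono : subSize t (p ++ [j]) ≤ subSize t p :=
          subSize_le_of_prefix ⟨[j], rfl⟩
        omega
  -- phi decreases along the path
  have down : ∀ d i, i + d ≤ k → phi t (u (i + d)) ≤ phi t (u i) := by
    intro d
    induction d with
    | zero => intro i _; simp
    | succ d ihd =>
      intro i hik
      have hstep : phi t (u (i + d + 1)) ≤ phi t (u (i + d)) := by
        obtain ⟨⟨j, hj⟩, hsz⟩ := hchild (i + d) (by omega)
        have hw : u (i + d) ++ [j] ∈ t := by
          rw [← hj]; exact hmem _ (by omega)
        have heq := phi_step hroot hw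
        rw [← hj] at heq
        have hs0 : (0 : ℝ) < subSize t (u (i + d + 1)) := by
          exact_mod_cast subSize_pos (hmem _ (by omega))
        have hphiv : 0 < phi t (u (i + d)) := phi_pos hroot _
        have hszR : (t.card : ℝ) ≤ 2 * subSize t (u (i + d + 1)) := by exact_mod_cast hsz
        have hfac : (t.card : ℝ) - subSize t (u (i + d + 1)) ≤ subSize t (u (i + d + 1)) := by
          linarith
        have h2 : phi t (u (i + d + 1)) * (subSize t (u (i + d + 1)) : ℝ)
            ≤ phi t (u (i + d)) * (subSize t (u (i + d + 1)) : ℝ) := by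
          rw [heq]
          exact mul_le_mul_of_nonneg_left hfac hphiv.le
        exact le_of_mul_le_mul_right h2 hs0
      have : i + (d + 1) = i + d + 1 := by omega
      rw [this]
      exact hstep.trans (ihd i (by omega))
  -- u k is a minimizer
  have minc : ∀ m, ∀ v : List ℕ, v.length = m → v ∈ t → phi t (u k) ≤ phi t v := by
    intro m
    induction m using Nat.strong_induction_on with
    | _ m ih =>
      intro v hlen hvt
      by_cases hp : ∃ i ≤ k, v = u i
      · obtain ⟨i, hik, rfl⟩ := hp
        have h := down (k - i) i (by omega)
        rwa [show i + (k - i) = k by omega] at h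
      · push_neg at hp
        have hoffv := offpath m v hlen hvt hp
        have hvne : v ≠ [] := by
          intro h
          exact hp 0 (Nat.zero_le k) (by rw [h, h0])
        obtain ⟨p, j, rfl⟩ : ∃ p j, v = p ++ [j] :=
          ⟨v.dropLast, v.getLast hvne, (List.dropLast_append_getLast hvne).symm⟩
        have hpt : p ∈ t := by
          have := hparent _ hvt (by simp)
          simpa using this
        have hplen : p.length < m := by
          simp at hlen
          omega
        have ih' := ih p.length hplen p rfl hpt
        have heq := phi_step hroot (v := p) (j := j) hvt
        have hs0 : (0 : ℝ) < subSize t (p ++ [j]) := by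
          exact_mod_cast subSize_pos hvt
        have hoffR : 2 * (subSize t (p ++ [j]) : ℝ) < t.card := by exact_mod_cast hoffv
        have hfac : (subSize t (p ++ [j]) : ℝ) ≤ (t.card : ℝ) - subSize t (p ++ [j]) := by
          linarith
        have hphp : 0 < phi t p := phi_pos hroot p
        have h2 : phi t p * (subSize t (p ++ [j]) : ℝ)
            ≤ phi t (p ++ [j]) * (subSize t (p ++ [j]) : ℝ) := by
          calc phi t p * (subSize t (p ++ [j]) : ℝ)
              ≤ phi t p * ((t.card : ℝ) - subSize t (p ++ [j])) :=
                mul_le_mul_of_nonneg_left hfac hphp.le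
            _ = phi t (p ++ [j]) * (subSize t (p ++ [j]) : ℝ) := heq.symm
        exact ih'.trans (le_of_mul_le_mul_right h2 hs0)
  have hmin : ∀ v ∈ t, phi t (u k) ≤ phi t v := fun v hv => minc v.length v rfl hv
  refine ⟨hmin, ?_⟩
  -- compute the infimum
  have hleast : IsLeast (phi t '' ↑t) (phi t (u k)) := by
    constructor
    · exact ⟨u k, hmem k le_rfl, rfl⟩
    · rintro x ⟨v, hv, rfl⟩
      exact hmin v hv
  have hsinf : sInf (phi t '' ↑t) = phi t (u k) := hleast.csInf_eq
  -- main inequality along the path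
  have hposfac : ∀ i, 1 ≤ i → i ≤ k → (0 : ℝ) < (t.card : ℝ) - subSize t (u i) := by
    intro i h1 h2
    have := subSize_lt hroot (hne i h1 h2)
    have h' : (subSize t (u i) : ℝ) < t.card := by exact_mod_cast this
    linarith
  have hkey : ∀ m ≤ k, phi t [] ≤ phi t (u m) *
      ∏ i ∈ Finset.Icc 1 m, (t.card : ℝ) / ((t.card : ℝ) - subSize t (u i)) := by
    intro m
    induction m with
    | zero => intro _; simp [h0]
    | succ m ihm =>
      intro hmk
      have hprev := ihm (by omega)
      obtain ⟨⟨j, hj⟩, hsz⟩ := hchild m (by omega)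
      have hw : u m ++ [j] ∈ t := by rw [← hj]; exact hmem _ hmk
      have heq := phi_step hroot hw
      rw [← hj] at heq
      have hs0 : (0 : ℝ) < subSize t (u (m + 1)) := by
        exact_mod_cast subSize_pos (hmem _ hmk)
      have hns : (0 : ℝ) < (t.card : ℝ) - subSize t (u (m + 1)) :=
        hposfac (m + 1) (by omega) hmk
      have hphim : phi t (u m) = phi t (u (m + 1)) *
          ((subSize t (u (m + 1)) : ℝ) / ((t.card : ℝ) - subSize t (u (m + 1)))) := by
        field_simp
        linarith [heq]
      have hsle : (subSize t (u (m + 1)) : ℝ) ≤ t.card := by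
        have := (subSize_lt hroot (hne (m + 1) (by omega) hmk)).le
        exact_mod_cast this
      have hmono : (subSize t (u (m + 1)) : ℝ) / ((t.card : ℝ) - subSize t (u (m + 1)))
          ≤ (t.card : ℝ) / ((t.card : ℝ) - subSize t (u (m + 1))) := by
        gcongr
      have hP : 0 ≤ ∏ i ∈ Finset.Icc 1 m, (t.card : ℝ) / ((t.card : ℝ) - subSize t (u i)) := by
        apply Finset.prod_nonneg
        intro i hi
        obtain ⟨h1, h2⟩ := Finset.mem_Icc.1 hi
        exact div_nonneg (Nat.cast_nonneg _) (hposfac i h1 (by omega)).le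
      calc phi t []
          ≤ phi t (u m) * ∏ i ∈ Finset.Icc 1 m,
              (t.card : ℝ) / ((t.card : ℝ) - subSize t (u i)) := hprev
        _ = phi t (u (m + 1)) *
              ((subSize t (u (m + 1)) : ℝ) / ((t.card : ℝ) - subSize t (u (m + 1)))) *
              ∏ i ∈ Finset.Icc 1 m, (t.card : ℝ) / ((t.card : ℝ) - subSize t (u i)) := by
            rw [hphim]
        _ ≤ phi t (u (m + 1)) *
              ((t.card : ℝ) / ((t.card : ℝ) - subSize t (u (m + 1)))) *
              ∏ i ∈ Finset.Icc 1 m, (t.card : ℝ) / ((t.card : ℝ) - subSize t (u i)) := by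
            apply mul_le_mul_of_nonneg_right _ hP
            exact mul_le_mul_of_nonneg_left hmono (phi_pos hroot _).le
        _ = phi t (u (m + 1)) * ∏ i ∈ Finset.Icc 1 (m + 1),
              (t.card : ℝ) / ((t.card : ℝ) - subSize t (u i)) := by
            rw [Finset.prod_Icc_succ_top (by omega : 1 ≤ m + 1)]
            ring
  have hphik : 0 < phi t (u k) := phi_pos hroot _
  rw [PhiRatio, hsinf, div_le_iff₀ hphik]
  have hprod : ∏ i ∈ Finset.Icc 1 k, (1 - (subSize t (u i) : ℝ) / t.card)⁻¹
      = ∏ i ∈ Finset.Icc 1 k, (t.card : ℝ) / ((t.card : ℝ) - subSize t (u i)) := by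
    apply Finset.prod_congr rfl
    intro i hi
    rw [one_sub_div (by exact_mod_cast hn.ne' : (t.card : ℝ) ≠ 0), inv_div]
  rw [hprod]
  have := hkey k le_rfl
  linarith [hkey k le_rfl]
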